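/- For any set a: pot(a) ⊆ levof(a), and a ∉ levof(a). -/
import Mathlib

def pot (a : ZFSet) : ZFSet :=
  ZFSet.sep (fun x => ∃ c ∈ a, x ⊆ c) (ZFSet.powerset (ZFSet.sUnion a))

def Potent (a : ZFSet) : Prop := ∀ x, (∃ c, x ⊆ c ∧ c ∈ a) → x ∈ a

def IsHistory (h : ZFSet) : Prop := ∀ x ∈ h, x = pot (x ∩ h)

def IsLevel (s : ZFSet) : Prop := ∃ h, IsHistory h ∧ s = pot h

noncomputable def levof (a : ZFSet) : ZFSet :=
  Classical.epsilon (fun s => IsLevel s ∧ a ⊆ s ∧ ∀ t, IsLevel t → a ⊆ t → t ∉ s)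

/-! Auxiliary development -/

theorem mem_pot {x a : ZFSet} : x ∈ pot a ↔ ∃ c ∈ a, x ⊆ c := by
  constructor
  · intro h
    exact (ZFSet.mem_sep.1 h).2
  · rintro ⟨c, hc, hxc⟩
    refine ZFSet.mem_sep.2 ⟨ZFSet.mem_powerset.2 ?_, c, hc, hxc⟩
    intro z hz
    exact ZFSet.mem_sUnion.2 ⟨c, hc, hxc hz⟩

theorem pot_mono {a b : ZFSet} (h : a ⊆ b) : pot a ⊆ pot b := by
  intro x hx
  obtain ⟨c, hc, hxc⟩ := mem_pot.1 hx
  exact mem_pot.2 ⟨c, h hc, hxc⟩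

theorem subset_pot (a : ZFSet) : a ⊆ pot a := fun x hx => mem_pot.2 ⟨x, hx, fun _ h => h⟩

theorem potent_pot (a : ZFSet) : Potent (pot a) := by
  rintro x ⟨c, hxc, hc⟩
  obtain ⟨d, hd, hcd⟩ := mem_pot.1 hc
  exact mem_pot.2 ⟨d, hd, fun z hz => hcd (hxc hz)⟩

theorem pot_transitive {a : ZFSet} (h : ∀ c ∈ a, c.IsTransitive) :
    (pot a).IsTransitive := by
  intro x hx y hy
  obtain ⟨c, hc, hxc⟩ := mem_pot.1 hx
  exact mem_pot.2 ⟨c, hc, (h c hc).subset_of_mem (hxc hy)⟩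

/-- Every member of a history is transitive and potent. -/
theorem hist_mem_trans_potent :
    ∀ x : ZFSet, (∀ h, IsHistory h → x ∈ h → x.IsTransitive ∧ Potent x) := by
  intro x
  induction x using ZFSet.inductionOn with
  | _ x IH =>
    intro h hh hx
    have hx' := hh x hx
    constructor
    · rw [hx']
      apply pot_transitive
      intro c hc
      exact (IH c (ZFSet.mem_inter.1 hc).1 h hh (ZFSet.mem_inter.1 hc).2).1
    · rw [hx']
      exact potent_pot _

theorem level_transitive {s : ZFSet} (hs : IsLevel s) : s.IsTransitive := by
  obtain ⟨h, hh, rfl⟩ := hs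
  exact pot_transitive fun c hc => (hist_mem_trans_potent c h hh hc).1

theorem level_potent {s : ZFSet} (hs : IsLevel s) : Potent s := by
  obtain ⟨h, hh, rfl⟩ := hs
  exact potent_pot _

theorem hist_mem_level {h x : ZFSet} (hh : IsHistory h) (hx : x ∈ h) : IsLevel x := by
  have htr : x.IsTransitive := (hist_mem_trans_potent x h hh hx).1
  refine ⟨x ∩ h, ?_, hh x hx⟩
  intro y hy
  obtain ⟨hyx, hyh⟩ := ZFSet.mem_inter.1 hy
  have heq : y ∩ h = y ∩ (x ∩ h) := by
    apply ZFSet.ext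
    intro z
    constructor
    · intro hz
      obtain ⟨h1, h2⟩ := ZFSet.mem_inter.1 hz
      exact ZFSet.mem_inter.2 ⟨h1, ZFSet.mem_inter.2 ⟨htr.mem_trans h1 hyx, h2⟩⟩
    · intro hz
      obtain ⟨h1, h2⟩ := ZFSet.mem_inter.1 hz
      exact ZFSet.mem_inter.2 ⟨h1, (ZFSet.mem_inter.1 h2).2⟩
  conv_lhs => rw [hh y hyh]
  rw [heq]

/-- The set of levels belonging to `s`. -/
def lvls (s : ZFSet) : ZFSet := ZFSet.sep IsLevel s

theorem mem_lvls {x s : ZFSet} : x ∈ lvls s ↔ x ∈ s ∧ IsLevel x := ZFSet.mem_sep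

theorem level_eq_pot_lvls {s : ZFSet} (hs : IsLevel s) : s = pot (lvls s) := by
  obtain ⟨h, hh, rfl⟩ := hs
  have hspotent : Potent (pot h) := potent_pot h
  have hsub : h ⊆ lvls (pot h) := fun x hx =>
    mem_lvls.2 ⟨subset_pot h hx, hist_mem_level hh hx⟩
  have hsub2 : lvls (pot h) ⊆ pot h := fun x hx => (mem_lvls.1 hx).1
  apply ZFSet.ext
  intro z
  constructor
  · intro hz
    exact pot_mono hsub hz
  · intro hz
    obtain ⟨c, hc, hzc⟩ := mem_pot.1 hz
    exact hspotent z ⟨c, hzc, hsub2 hc⟩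

theorem lvls_history {s : ZFSet} (hs : IsLevel s) : IsHistory (lvls s) := by
  intro x hx
  obtain ⟨hxs, hxl⟩ := mem_lvls.1 hx
  have hxe : x ∩ lvls s = lvls x := by
    apply ZFSet.ext
    intro z
    constructor
    · intro hz
      obtain ⟨h1, h2⟩ := ZFSet.mem_inter.1 hz
      exact mem_lvls.2 ⟨h1, (mem_lvls.1 h2).2⟩
    · intro hz
      obtain ⟨h1, h2⟩ := mem_lvls.1 hz
      exact ZFSet.mem_inter.2 ⟨h1, mem_lvls.2 ⟨(level_transitive hs).mem_trans h1 hxs, h2⟩⟩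
  rw [hxe]
  exact level_eq_pot_lvls hxl

/-- Weak linearity of levels, both directions, by double ∈-induction. -/
theorem level_weak_linear :
    ∀ t s : ZFSet, IsLevel t → IsLevel s → (s ∈ t ∨ t ⊆ s) ∧ (t ∈ s ∨ s ⊆ t) := by
  intro t
  induction t using ZFSet.inductionOn with
  | _ t IHt =>
    intro s
    induction s using ZFSet.inductionOn with
    | _ s IHs =>
      intro ht hs
      constructor
      · -- s ∈ t ∨ t ⊆ s
        by_cases hst : s ∈ t
        · exact Or.inl hst
        · refine Or.inr ?_
          intro z hz
          rw [level_eq_pot_lvls ht] at hz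
          obtain ⟨u, hu, hzu⟩ := mem_pot.1 hz
          obtain ⟨hut, hul⟩ := mem_lvls.1 hu
          obtain ⟨h1, h2⟩ := IHt u hut s hul hs
          rcases h1 with hsu | hus
          · exact absurd ((level_transitive ht).mem_trans hsu hut) hst
          · rcases h2 with hus' | hsu'
            · exact level_potent hs z ⟨u, hzu, hus'⟩
            · exact absurd (ZFSet.ext_iff.2 (fun w => ⟨fun hw => hsu' hw, fun hw => hus hw⟩) ▸ hut) hst
      · -- t ∈ s ∨ s ⊆ t
        by_cases hts : t ∈ s
        · exact Or.inl hts
        · refine Or.inr ?_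
          intro z hz
          rw [level_eq_pot_lvls hs] at hz
          obtain ⟨r, hr, hzr⟩ := mem_pot.1 hz
          obtain ⟨hrs, hrl⟩ := mem_lvls.1 hr
          obtain ⟨h1, h2⟩ := IHs r hrs ht hrl
          rcases h1 with hrt | htr
          · exact level_potent ht z ⟨r, hzr, hrt⟩
          · rcases h2 with htr' | hrt'
            · exact absurd ((level_transitive hs).mem_trans htr' hrs) hts
            · have : r = t := ZFSet.ext fun w => ⟨fun hw => hrt' hw, fun hw => htr hw⟩
              exact absurd (this ▸ hrs) hts

theorem level_tricho {s t : ZFSet} (hs : IsLevel s) (ht : IsLevel t) :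
    s ∈ t ∨ s = t ∨ t ∈ s := by
  obtain ⟨h1, h2⟩ := level_weak_linear t s ht hs
  rcases h1 with h | h
  · exact Or.inl h
  rcases h2 with h' | h'
  · exact Or.inr (Or.inr h')
  · exact Or.inr (Or.inl (ZFSet.ext fun w => ⟨fun hw => h' hw, fun hw => h hw⟩))

/-- The conditional spec of `levof`. -/
theorem levof_spec_of_exists {a : ZFSet} (hex : ∃ s, IsLevel s ∧ a ⊆ s) :
    IsLevel (levof a) ∧ a ⊆ levof a ∧ ∀ t, IsLevel t → a ⊆ t → t ∉ levof a := by
  have : ∃ s, IsLevel s ∧ a ⊆ s ∧ ∀ t, IsLevel t → a ⊆ t → t ∉ s := by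
    obtain ⟨m, hm, hmin⟩ := ZFSet.mem_wf.has_min {s | IsLevel s ∧ a ⊆ s}
      ⟨hex.choose, hex.choose_spec⟩
    exact ⟨m, hm.1, hm.2, fun t htl hta => hmin t ⟨htl, hta⟩⟩
  exact Classical.epsilon_spec this

noncomputable instance (f : ZFSet → ZFSet) : ZFSet.Definable₁ f := Classical.allZFSetDefinable _

/-- Every set is a subset of some level. -/
theorem exists_level (a : ZFSet) : ∃ s, IsLevel s ∧ a ⊆ s := by
  induction a using ZFSet.inductionOn with
  | _ a IH =>
    -- h := all levels ≤ levof x for x ∈ a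
    set h : ZFSet := ZFSet.sep IsLevel
      (ZFSet.sUnion (ZFSet.image (fun x => insert (levof x) (levof x)) a)) with hdef
    have memh : ∀ u, u ∈ h ↔ (IsLevel u ∧ ∃ x ∈ a, u ∈ levof x ∨ u = levof x) := by
      intro u
      rw [hdef, ZFSet.mem_sep]
      simp only [ZFSet.mem_sUnion, ZFSet.mem_image]
      constructor
      · rintro ⟨⟨w, ⟨x, hxa, rfl⟩, hw⟩, hl⟩
        rcases ZFSet.mem_insert_iff.1 hw with h | h
        · exact ⟨hl, x, hxa, Or.inr h⟩
        · exact ⟨hl, x, hxa, Or.inl h⟩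
      · rintro ⟨hl, x, hxa, hu⟩
        refine ⟨⟨insert (levof x) (levof x), ⟨x, hxa, rfl⟩, ?_⟩, hl⟩
        rcases hu with h | h
        · exact ZFSet.mem_insert_iff.2 (Or.inr h)
        · exact ZFSet.mem_insert_iff.2 (Or.inl h)
    have hlev : ∀ x ∈ a, IsLevel (levof x) ∧ x ⊆ levof x := by
      intro x hxa
      obtain ⟨h1, h2, _⟩ := levof_spec_of_exists (IH x hxa)
      exact ⟨h1, h2⟩
    have hh : IsHistory h := by
      intro t ht
      obtain ⟨htl, x, hxa, hcase⟩ := (memh t).1 ht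
      have : t ∩ h = lvls t := by
        apply ZFSet.ext
        intro z
        simp only [ZFSet.mem_inter, mem_lvls, memh]
        constructor
        · rintro ⟨hzt, hzl, _⟩
          exact ⟨hzt, hzl⟩
        · rintro ⟨hzt, hzl⟩
          refine ⟨hzt, hzl, x, hxa, Or.inl ?_⟩
          rcases hcase with h' | h'
          · exact (level_transitive (hlev x hxa).1).mem_trans hzt h'
          · exact h' ▸ hzt
      rw [this]
      exact level_eq_pot_lvls htl
    refine ⟨pot h, ⟨h, hh, rfl⟩, ?_⟩
    intro x hxa
    obtain ⟨h1, h2⟩ := hlev x hxa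
    exact mem_pot.2 ⟨levof x, (memh _).2 ⟨h1, x, hxa, Or.inr rfl⟩, h2⟩

theorem levof_spec (a : ZFSet) :
    IsLevel (levof a) ∧ a ⊆ levof a ∧ ∀ t, IsLevel t → a ⊆ t → t ∉ levof a :=
  levof_spec_of_exists (exists_level a)

theorem stmt9 (a : ZFSet) : pot a ⊆ levof a ∧ a ∉ levof a := by
  obtain ⟨hl, hsub, hmin⟩ := levof_spec a
  constructor
  · intro z hz
    obtain ⟨c, hc, hzc⟩ := mem_pot.1 hz
    exact level_potent hl z ⟨c, hzc, hsub hc⟩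
  · intro hmem
    rw [level_eq_pot_lvls hl] at hmem
    obtain ⟨u, hu, hau⟩ := mem_pot.1 hmem
    obtain ⟨hus, hul⟩ := mem_lvls.1 hu
    exact hmin u hul hau hus
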